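/- Let E₁, E₂ be real finite-dimensional inner product spaces, 𝒳 ⊆ E₁ a nonempty closed convex set with metric projection P_𝒳, and for γ > 0 define 𝒢_𝒳(x, g, γ) := (x − P_𝒳(x − γg))/γ. Fix 0 < μ_g ≤ L_{g,1}, L_{f,0}, L_{f,1}, L_{g,2} > 0, κ_g := L_{g,1}/μ_g, κ_F := 2L_{f,1}²/μ_g² + 4L_{f,0}²L_{g,2}²/μ_g⁴ + 16L_{f,1}²L_{g,1}²/μ_g⁴ + 16L_{f,0}²L_{g,1}²L_{g,2}²/μ_g⁶. Let f̂ : E₁ × E₂ → ℝ be differentiable with ∇f̂ L_{f,1}-Lipschitz (ℓ² product norm) and ‖∇f̂(x,y)‖ ≤ L_{f,0} everywhere; let ĝ : E₁ × E₂ → ℝ be such that ĝ(x,·) is differentiable and μ_g-strongly convex with unique minimizer y*(x); let Ĥ : E₁ × E₂ → (operators E₂ → E₂) take self-adjoint values with ⟨Ĥ(x,y)v, v⟩ ≥ μ_g‖v‖², ‖Ĥ(x,y)‖ ≤ L_{g,1}, and be L_{g,2}-Lipschitz; and let Ĵ : E₁ × E₂ → (operators E₂ → E₁) satisfy ‖Ĵ(x,y)‖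 ≤ L_{g,1} and be L_{g,2}-Lipschitz. Define v*(x,y) := Ĥ(x,y)⁻¹ ∇_y f̂(x,y), ∇̃f̂(x,y,v) := ∇_x f̂(x,y) − Ĵ(x,y) v, and ∇F̂(x) := ∇̃f̂(x, y*(x), v*(x, y*(x))). Let x ∈ 𝒳, y ∈ E₂, v ∈ E₂, γ > 0, δ ≥ 0, W > 0, and suppose ‖∇̃f̂(x,y,v)‖² + κ_F ‖∇_y ĝ(x,y)‖² + 8κ_g² ‖Ĥ(x,y) v − ∇_y f̂(x,y)‖² ≤ δ²/W². Then ‖𝒢_𝒳(x, ∇F̂(x), γ)‖² ≤ 2δ²/W². -/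

import Mathlib

open scoped RealInnerProductSpace

private lemma le_of_sq_le_sq' {a b : ℝ} (ha : 0 ≤ a) (hb : 0 ≤ b) (h : a ^ 2 ≤ b ^ 2) :
    a ≤ b := by nlinarith

private lemma proj_nonexpansive {E : Type*} [NormedAddCommGroup E] [InnerProductSpace ℝ E]
    {X : Set E} (hXne : X.Nonempty) (hXconv : Convex ℝ X) {P : E → E}
    (hproj : ∀ z : E, P z ∈ X ∧ ∀ u ∈ X, ‖z - P z‖ ≤ ‖z - u‖) (z₁ z₂ : E) :
    ‖P z₁ - P z₂‖ ≤ ‖z₁ - z₂‖ := by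
  have var : ∀ z : E, ∀ u ∈ X, ⟪z - P z, u - P z⟫ ≤ 0 := by
    intro z u hu
    have hne : Nonempty X := hXne.to_subtype
    have heq : ‖z - P z‖ = ⨅ w : X, ‖z - w‖ := by
      refine le_antisymm (le_ciInf fun w => (hproj z).2 w w.2) ?_
      have hbdd : BddBelow (Set.range fun w : X => ‖z - (w : E)‖) :=
        ⟨0, by rintro a ⟨w, rfl⟩; exact norm_nonneg _⟩
      exact ciInf_le hbdd ⟨P z, (hproj z).1⟩
    exact (norm_eq_iInf_iff_real_inner_le_zero hXconv (hproj z).1).1 heq u hu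
  have h1 := var z₁ (P z₂) (hproj z₂).1
  have h2 := var z₂ (P z₁) (hproj z₁).1
  have key : ‖P z₁ - P z₂‖ ^ 2 ≤ ⟪z₁ - z₂, P z₁ - P z₂⟫ := by
    have hdec : z₁ - z₂ = ((z₁ - P z₁) - (z₂ - P z₂)) + (P z₁ - P z₂) := by abel
    rw [hdec, inner_add_left, inner_sub_left, real_inner_self_eq_norm_sq]
    have e1 : ⟪z₁ - P z₁, P z₁ - P z₂⟫ = -⟪z₁ - P z₁, P z₂ - P z₁⟫ := by
      rw [← inner_neg_right]; congr 1; abel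
    have e1' : 0 ≤ -⟪z₁ - P z₁, P z₂ - P z₁⟫ := neg_nonneg.mpr h1
    rw [e1]
    linarith [h2, e1']
  have hin := real_inner_le_norm (z₁ - z₂) (P z₁ - P z₂)
  by_cases hz : P z₁ - P z₂ = 0
  · simp [hz]
  · have hpos : 0 < ‖P z₁ - P z₂‖ := norm_pos_iff.mpr hz
    nlinarith [key, hin]

private lemma convex_first_order {E : Type*} [NormedAddCommGroup E] [InnerProductSpace ℝ E]
    {φ : E → ℝ} (hφ : ConvexOn ℝ Set.univ φ) {a : E} {D : E →L[ℝ] ℝ}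
    (hD : HasFDerivAt φ D a) (b : E) : D (b - a) ≤ φ b - φ a := by
  set ψ : ℝ → ℝ := fun t => φ (t • (b - a) + a) with hψdef
  have hψconv : ConvexOn ℝ Set.univ ψ := by
    have h := hφ.comp_affineMap (AffineMap.lineMap a b : ℝ →ᵃ[ℝ] E)
    have heq : (φ ∘ (AffineMap.lineMap a b : ℝ →ᵃ[ℝ] E)) = ψ := by
      funext t
      simp [ψ, AffineMap.lineMap_apply, vsub_eq_sub, vadd_eq_add]
    rw [heq] at h
    simpa using h
  have hline : HasDerivAt (fun t : ℝ => t • (b - a) + a) (b - a) 0 := by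
    simpa using ((hasDerivAt_id (0 : ℝ)).smul_const (b - a)).add_const a
  have hD' : HasFDerivAt φ D ((0 : ℝ) • (b - a) + a) := by simpa using hD
  have hcomp : HasDerivAt ψ (D (b - a)) 0 := hD'.comp_hasDerivAt 0 hline
  have hs := hψconv.le_slope_of_hasDerivAt (Set.mem_univ (0 : ℝ)) (Set.mem_univ (1 : ℝ))
    one_pos hcomp
  have : slope ψ 0 1 = φ b - φ a := by
    rw [slope_def_field]
    simp [ψ]
  linarith [hs, this ▸ hs]

private lemma sc_grad_bound {E : Type*} [NormedAddCommGroup E] [InnerProductSpace ℝ E]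
    [FiniteDimensional ℝ E] {μ : ℝ} (hμ : 0 < μ) {g : E → ℝ} {grad : E → E}
    (hgrad : ∀ z : E, HasGradientAt g (grad z) z)
    (hsc : StrongConvexOn Set.univ μ g) {y ys : E} (hmin : ∀ z : E, g ys ≤ g z) :
    μ * ‖y - ys‖ ≤ ‖grad y‖ := by
  have hys0 : grad ys = 0 := by
    have hloc : IsLocalMin g ys := Filter.Eventually.of_forall hmin
    have h0 := hloc.hasFDerivAt_eq_zero (hgrad ys).hasFDerivAt
    exact (LinearIsometryEquiv.map_eq_zero_iff (InnerProductSpace.toDual ℝ E)).mp h0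
  have hconv : ConvexOn ℝ Set.univ (fun z => g z - μ / 2 * ‖z‖ ^ 2) :=
    strongConvexOn_iff_convex.mp hsc
  have hder : ∀ a : E, HasFDerivAt (fun z => g z - μ / 2 * ‖z‖ ^ 2)
      ((InnerProductSpace.toDual ℝ E (grad a) : E →L[ℝ] ℝ) - (μ / 2) • (2 • innerSL ℝ a)) a :=
    fun a =>
      (hgrad a).hasFDerivAt.sub ((hasStrictFDerivAt_norm_sq a).hasFDerivAt.const_mul (μ / 2))
  have h1 := convex_first_order hconv (hder y) ys
  have h2 := convex_first_order hconv (hder ys) y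
  simp only [ContinuousLinearMap.sub_apply, ContinuousLinearMap.smul_apply,
    ContinuousLinearMap.coe_smul', Pi.smul_apply, innerSL_apply_apply,
    InnerProductSpace.toDual_apply_apply, smul_eq_mul, nsmul_eq_mul, hys0, inner_zero_left] at h1 h2
  have hkey : μ * ‖ys - y‖ ^ 2 ≤ ⟪grad y, y - ys⟫ := by
    have hnorm : ‖ys - y‖ ^ 2 = ⟪ys - y, ys - y⟫ := (real_inner_self_eq_norm_sq _).symm
    have hin1 : ⟪grad y, y - ys⟫ = -⟪grad y, ys - y⟫ := by
      rw [← inner_neg_right]; congr 1; abel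
    have e2 : ⟪ys - y, ys - y⟫ = ⟪ys, ys⟫ - ⟪ys, y⟫ - ⟪y, ys⟫ + ⟪y, y⟫ := by
      rw [inner_sub_left, inner_sub_right, inner_sub_right]; ring
    have e3 : ⟪y, ys - y⟫ = ⟪y, ys⟫ - ⟪y, y⟫ := by simp [inner_sub_right]
    have e4 : ⟪ys, y - ys⟫ = ⟪ys, y⟫ - ⟪ys, ys⟫ := by simp [inner_sub_right]
    have hcomm : ⟪ys, y⟫ = ⟪y, ys⟫ := real_inner_comm _ _
    rw [hnorm, hin1, e2]
    nlinarith [h1, h2, e3, e4, hcomm]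
  have hns : ‖ys - y‖ = ‖y - ys‖ := norm_sub_rev _ _
  rw [hns] at hkey
  have hin := real_inner_le_norm (grad y) (y - ys)
  by_cases hz : y - ys = 0
  · simp only [hz, norm_zero, mul_zero]
    exact norm_nonneg _
  · have hpos : 0 < ‖y - ys‖ := norm_pos_iff.mpr hz
    nlinarith [hkey, hin]

private lemma scalar_key {μ L1 Lf0 Lf1 Lg2 κ κF N G e : ℝ}
    (hμ : 0 < μ) (hμL : μ ≤ L1) (hLf0 : 0 < Lf0) (hLf1 : 0 < Lf1) (hLg2 : 0 < Lg2)
    (hκ : κ = L1 / μ)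
    (hκF : κF = 2 * Lf1 ^ 2 / μ ^ 2 + 4 * Lf0 ^ 2 * Lg2 ^ 2 / μ ^ 4 +
      16 * Lf1 ^ 2 * L1 ^ 2 / μ ^ 4 + 16 * Lf0 ^ 2 * L1 ^ 2 * Lg2 ^ 2 / μ ^ 6)
    (hN : 0 ≤ N) (hG : 0 ≤ G) (he : 0 ≤ e)
    (h11 : μ ^ 3 * N ≤ (μ ^ 2 * Lf1 + μ * L1 * Lf1 + L1 * Lf0 * Lg2 + μ * Lf0 * Lg2) * G
      + μ ^ 2 * L1 * e) :
    N ^ 2 ≤ κF * G ^ 2 + 8 * κ ^ 2 * e ^ 2 := by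
  have hL1 : (0 : ℝ) ≤ L1 := hμ.le.trans hμL
  have hCle : μ ^ 2 * Lf1 + μ * L1 * Lf1 + L1 * Lf0 * Lg2 + μ * Lf0 * Lg2 ≤
      2 * L1 * (μ * Lf1 + Lf0 * Lg2) := by
    linarith only [mul_le_mul_of_nonneg_right hμL (mul_nonneg hμ.le hLf1.le),
      mul_le_mul_of_nonneg_right hμL (mul_nonneg hLf0.le hLg2.le)]
  have s1 : μ ^ 3 * N ≤ 2 * L1 * (μ * Lf1 + Lf0 * Lg2) * G + μ ^ 2 * L1 * e := by
    linarith only [h11, mul_le_mul_of_nonneg_right hCle hG]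
  have s2 : (μ ^ 3 * N) ^ 2 ≤ (2 * L1 * (μ * Lf1 + Lf0 * Lg2) * G + μ ^ 2 * L1 * e) ^ 2 :=
    pow_le_pow_left₀ (mul_nonneg (pow_nonneg hμ.le 3) hN) s1 2
  have s3 : (2 * L1 * (μ * Lf1 + Lf0 * Lg2) * G + μ ^ 2 * L1 * e) ^ 2 ≤
      8 * L1 ^ 2 * (μ * Lf1 + Lf0 * Lg2) ^ 2 * G ^ 2 + 2 * μ ^ 4 * L1 ^ 2 * e ^ 2 := by
    linarith only [sq_nonneg (2 * L1 * (μ * Lf1 + Lf0 * Lg2) * G - μ ^ 2 * L1 * e)]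
  have s4 : (μ * Lf1 + Lf0 * Lg2) ^ 2 ≤ 2 * (μ ^ 2 * Lf1 ^ 2 + Lf0 ^ 2 * Lg2 ^ 2) := by
    linarith only [sq_nonneg (μ * Lf1 - Lf0 * Lg2)]
  have s5 : 8 * L1 ^ 2 * (μ * Lf1 + Lf0 * Lg2) ^ 2 * G ^ 2 ≤
      16 * L1 ^ 2 * μ ^ 2 * Lf1 ^ 2 * G ^ 2 + 16 * L1 ^ 2 * Lf0 ^ 2 * Lg2 ^ 2 * G ^ 2 := by
    have h := mul_le_mul_of_nonneg_left (mul_le_mul_of_nonneg_right s4 (sq_nonneg G))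
      (by positivity : (0 : ℝ) ≤ 8 * L1 ^ 2)
    linarith only [h]
  have hrhs : μ ^ 6 * (κF * G ^ 2 + 8 * κ ^ 2 * e ^ 2) =
      2 * Lf1 ^ 2 * μ ^ 4 * G ^ 2 + 4 * Lf0 ^ 2 * Lg2 ^ 2 * μ ^ 2 * G ^ 2 +
      16 * Lf1 ^ 2 * L1 ^ 2 * μ ^ 2 * G ^ 2 + 16 * Lf0 ^ 2 * L1 ^ 2 * Lg2 ^ 2 * G ^ 2 +
      8 * μ ^ 4 * L1 ^ 2 * e ^ 2 := by
    rw [hκF, hκ]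
    field_simp
  have hfin : μ ^ 6 * N ^ 2 ≤ μ ^ 6 * (κF * G ^ 2 + 8 * κ ^ 2 * e ^ 2) := by
    have e1 : (μ ^ 3 * N) ^ 2 = μ ^ 6 * N ^ 2 := by ring
    rw [hrhs]
    linarith only [s2, s3, s5, e1,
      mul_nonneg (mul_nonneg (mul_nonneg (by norm_num : (0:ℝ) ≤ 2) (sq_nonneg Lf1))
        (pow_nonneg hμ.le 4)) (sq_nonneg G),
      mul_nonneg (mul_nonneg (mul_nonneg (mul_nonneg (by norm_num : (0:ℝ) ≤ 4)
        (sq_nonneg Lf0)) (sq_nonneg Lg2)) (pow_nonneg hμ.le 2)) (sq_nonneg G),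
      mul_nonneg (mul_nonneg (mul_nonneg (by norm_num : (0:ℝ) ≤ 6) (pow_nonneg hμ.le 4))
        (sq_nonneg L1)) (sq_nonneg e)]
  exact le_of_mul_le_mul_left hfin (by positivity)

set_option maxHeartbeats 800000 in
theorem stopping_condition_gradient_mapping {E₁ E₂ : Type*}
    [NormedAddCommGroup E₁] [InnerProductSpace ℝ E₁] [FiniteDimensional ℝ E₁]
    [NormedAddCommGroup E₂] [InnerProductSpace ℝ E₂] [FiniteDimensional ℝ E₂]
    (X : Set E₁) (hXne : X.Nonempty) (hXcl : IsClosed X) (hXconv : Convex ℝ X)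
    (projX : E₁ → E₁)
    (hproj : ∀ z : E₁, projX z ∈ X ∧ ∀ u ∈ X, ‖z - projX z‖ ≤ ‖z - u‖)
    (μ_g L_g1 L_f0 L_f1 L_g2 : ℝ)
    (hμ : 0 < μ_g) (hμL : μ_g ≤ L_g1) (hLf0 : 0 < L_f0) (hLf1 : 0 < L_f1) (hLg2 : 0 < L_g2)
    (κ_g κ_F : ℝ) (hκg : κ_g = L_g1 / μ_g)
    (hκF : κ_F = 2 * L_f1 ^ 2 / μ_g ^ 2 + 4 * L_f0 ^ 2 * L_g2 ^ 2 / μ_g ^ 4 +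
      16 * L_f1 ^ 2 * L_g1 ^ 2 / μ_g ^ 4 + 16 * L_f0 ^ 2 * L_g1 ^ 2 * L_g2 ^ 2 / μ_g ^ 6)
    (fhat : E₁ → E₂ → ℝ) (fhatx : E₁ → E₂ → E₁) (fhaty : E₁ → E₂ → E₂)
    (hfx : ∀ (x : E₁) (y : E₂), HasGradientAt (fun x' => fhat x' y) (fhatx x y) x)
    (hfy : ∀ (x : E₁) (y : E₂), HasGradientAt (fun y' => fhat x y') (fhaty x y) y)
    (hfbd : ∀ (x : E₁) (y : E₂), ‖fhatx x y‖ ^ 2 + ‖fhaty x y‖ ^ 2 ≤ L_f0 ^ 2)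
    (hflip : ∀ (x x' : E₁) (y y' : E₂),
      ‖fhatx x y - fhatx x' y'‖ ^ 2 + ‖fhaty x y - fhaty x' y'‖ ^ 2 ≤
        L_f1 ^ 2 * (‖x - x'‖ ^ 2 + ‖y - y'‖ ^ 2))
    (ghat : E₁ → E₂ → ℝ) (ghaty : E₁ → E₂ → E₂) (ystar : E₁ → E₂)
    (hggrad : ∀ (x : E₁) (y : E₂), HasGradientAt (ghat x) (ghaty x y) y)
    (hgsc : ∀ x : E₁, StrongConvexOn Set.univ μ_g (ghat x))
    (hymin : ∀ (x : E₁) (y : E₂), ghat x (ystar x) ≤ ghat x y)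
    (Hhat : E₁ → E₂ → (E₂ →L[ℝ] E₂)) (Jhat : E₁ → E₂ → (E₂ →L[ℝ] E₁))
    (hHsa : ∀ (x : E₁) (y : E₂) (v u : E₂), ⟪Hhat x y v, u⟫ = ⟪v, Hhat x y u⟫)
    (hHcoer : ∀ (x : E₁) (y : E₂) (v : E₂), μ_g * ‖v‖ ^ 2 ≤ ⟪Hhat x y v, v⟫)
    (hHbd : ∀ (x : E₁) (y : E₂), ‖Hhat x y‖ ≤ L_g1)
    (hHlip : ∀ (x x' : E₁) (y y' : E₂),
      ‖Hhat x y - Hhat x' y'‖ ^ 2 ≤ L_g2 ^ 2 * (‖x - x'‖ ^ 2 + ‖y - y'‖ ^ 2))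
    (hJbd : ∀ (x : E₁) (y : E₂), ‖Jhat x y‖ ≤ L_g1)
    (hJlip : ∀ (x x' : E₁) (y y' : E₂),
      ‖Jhat x y - Jhat x' y'‖ ^ 2 ≤ L_g2 ^ 2 * (‖x - x'‖ ^ 2 + ‖y - y'‖ ^ 2))
    (vstar : E₁ → E₂ → E₂)
    (hvstar : ∀ (x : E₁) (y : E₂), Hhat x y (vstar x y) = fhaty x y)
    (x : E₁) (hx : x ∈ X) (y v : E₂)
    (γ δ W : ℝ) (hγ : 0 < γ) (hδ : 0 ≤ δ) (hWpos : 0 < W)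
    (hstop : ‖fhatx x y - Jhat x y v‖ ^ 2 + κ_F * ‖ghaty x y‖ ^ 2 +
      8 * κ_g ^ 2 * ‖Hhat x y v - fhaty x y‖ ^ 2 ≤ δ ^ 2 / W ^ 2) :
    ‖γ⁻¹ • (x - projX (x - γ •
        (fhatx x (ystar x) - Jhat x (ystar x) (vstar x (ystar x)))))‖ ^ 2 ≤
      2 * δ ^ 2 / W ^ 2 := by
  set ys := ystar x with hysdef
  set GF := fhatx x ys - Jhat x ys (vstar x ys) with hGFdef
  set T := fhatx x y - Jhat x y v with hTdef
  set w := vstar x y with hwdef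
  set w' := vstar x ys with hw'def
  -- projection / gradient mapping bound
  have hPx : projX x = x := by
    have h := (hproj x).2 x hx
    have h0 : ‖x - projX x‖ = 0 := le_antisymm (by simpa using h) (norm_nonneg _)
    exact (sub_eq_zero.mp (norm_eq_zero.mp h0)).symm
  have hnonexp := proj_nonexpansive hXne hXconv hproj x (x - γ • GF)
  rw [hPx] at hnonexp
  have hsimp : x - (x - γ • GF) = γ • GF := by abel
  rw [hsimp, norm_smul, Real.norm_eq_abs, abs_of_pos hγ] at hnonexp
  have hmap : ‖γ⁻¹ • (x - projX (x - γ • GF))‖ ≤ ‖GF‖ := by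
    rw [norm_smul, Real.norm_eq_abs, abs_of_pos (inv_pos.mpr hγ)]
    calc γ⁻¹ * ‖x - projX (x - γ • GF)‖ ≤ γ⁻¹ * (γ * ‖GF‖) :=
          mul_le_mul_of_nonneg_left hnonexp (inv_pos.mpr hγ).le
      _ = ‖GF‖ := by field_simp
  -- coercivity of Hhat
  have hcoer : ∀ (yy : E₂) (u : E₂), μ_g * ‖u‖ ≤ ‖Hhat x yy u‖ := by
    intro yy u
    have h := hHcoer x yy u
    have hin := real_inner_le_norm (Hhat x yy u) u
    by_cases hu : u = 0
    · simp [hu]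
    · have hpos : 0 < ‖u‖ := norm_pos_iff.mpr hu
      have h2' : μ_g * ‖u‖ * ‖u‖ ≤ ‖Hhat x yy u‖ * ‖u‖ := by linarith only [h, hin]
      exact le_of_mul_le_mul_right h2' hpos
  -- distance to minimizer
  have hd0 : (0 : ℝ) ≤ ‖ys - y‖ := norm_nonneg _
  have hd1 : μ_g * ‖ys - y‖ ≤ ‖ghaty x y‖ := by
    have h := sc_grad_bound hμ (hggrad x) (hgsc x) (fun z => hymin x z) (y := y) (ys := ys)
    rwa [norm_sub_rev]
  -- Lipschitz consequences
  have hf' := hflip x x ys y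
  simp only [sub_self, norm_zero] at hf'
  have h2 : ‖fhatx x ys - fhatx x y‖ ≤ L_f1 * ‖ys - y‖ :=
    le_of_sq_le_sq' (norm_nonneg _) (mul_nonneg hLf1.le hd0)
      (by linarith only [hf', sq_nonneg ‖fhaty x ys - fhaty x y‖])
  have h3 : ‖fhaty x ys - fhaty x y‖ ≤ L_f1 * ‖ys - y‖ :=
    le_of_sq_le_sq' (norm_nonneg _) (mul_nonneg hLf1.le hd0)
      (by linarith only [hf', sq_nonneg ‖fhatx x ys - fhatx x y‖])
  have h4 : ‖Hhat x y - Hhat x ys‖ ≤ L_g2 * ‖ys - y‖ := by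
    have hh := hHlip x x y ys
    simp only [sub_self, norm_zero] at hh
    have hrev : ‖y - ys‖ = ‖ys - y‖ := norm_sub_rev _ _
    rw [hrev] at hh
    refine le_of_sq_le_sq' (norm_nonneg _) (mul_nonneg hLg2.le hd0) ?_
    linarith only [hh]
  have h5 : ‖Jhat x ys - Jhat x y‖ ≤ L_g2 * ‖ys - y‖ := by
    have hh := hJlip x x ys y
    simp only [sub_self, norm_zero] at hh
    refine le_of_sq_le_sq' (norm_nonneg _) (mul_nonneg hLg2.le hd0) ?_
    linarith only [hh]
  have hfy_le : ‖fhaty x y‖ ≤ L_f0 :=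
    le_of_sq_le_sq' (norm_nonneg _) hLf0.le (by linarith only [hfbd x y, sq_nonneg ‖fhatx x y‖])
  have h6 : μ_g * ‖w‖ ≤ L_f0 := by
    have hc := hcoer y w
    rw [hwdef, hvstar] at hc
    exact hc.trans hfy_le
  have h7 : μ_g ^ 2 * ‖w' - w‖ ≤ μ_g * L_f1 * ‖ys - y‖ + L_f0 * L_g2 * ‖ys - y‖ := by
    have hc := hcoer ys (w' - w)
    have heq : Hhat x ys (w' - w) = (fhaty x ys - fhaty x y) + (Hhat x y - Hhat x ys) w := by
      rw [map_sub, hw'def, hvstar, ContinuousLinearMap.sub_apply, hwdef, hvstar]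
      abel
    have hb : ‖Hhat x ys (w' - w)‖ ≤ L_f1 * ‖ys - y‖ + (L_g2 * ‖ys - y‖) * ‖w‖ := by
      rw [heq]
      refine (norm_add_le _ _).trans (add_le_add h3 ?_)
      exact ((Hhat x y - Hhat x ys).le_opNorm w).trans
        (mul_le_mul_of_nonneg_right h4 (norm_nonneg _))
    linarith only [mul_le_mul_of_nonneg_left (hc.trans hb) hμ.le,
      mul_le_mul_of_nonneg_left h6 (mul_nonneg hLg2.le hd0)]
  have h8 : μ_g * ‖w - v‖ ≤ ‖Hhat x y v - fhaty x y‖ := by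
    have hc := hcoer y (w - v)
    have heq : Hhat x y (w - v) = fhaty x y - Hhat x y v := by
      rw [map_sub, hwdef, hvstar]
    rw [heq] at hc
    exact hc.trans_eq (norm_sub_rev _ _)
  -- decomposition of the hypergradient error
  have h9 : GF - T = (fhatx x ys - fhatx x y) - Jhat x ys (w' - w)
      - (Jhat x ys - Jhat x y) w - Jhat x y (w - v) := by
    simp only [hGFdef, hTdef, map_sub, ContinuousLinearMap.sub_apply]
    abel
  have h10 : ‖GF - T‖ ≤ L_f1 * ‖ys - y‖ + L_g1 * ‖w' - w‖
      + (L_g2 * ‖ys - y‖) * ‖w‖ + L_g1 * ‖w - v‖ := by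
    rw [h9]
    have t1 : ‖Jhat x ys (w' - w)‖ ≤ L_g1 * ‖w' - w‖ :=
      ((Jhat x ys).le_opNorm _).trans (mul_le_mul_of_nonneg_right (hJbd x ys) (norm_nonneg _))
    have t2 : ‖(Jhat x ys - Jhat x y) w‖ ≤ (L_g2 * ‖ys - y‖) * ‖w‖ :=
      ((Jhat x ys - Jhat x y).le_opNorm _).trans (mul_le_mul_of_nonneg_right h5 (norm_nonneg _))
    have t3 : ‖Jhat x y (w - v)‖ ≤ L_g1 * ‖w - v‖ :=
      ((Jhat x y).le_opNorm _).trans (mul_le_mul_of_nonneg_right (hJbd x y) (norm_nonneg _))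
    have n1 := norm_sub_le ((fhatx x ys - fhatx x y) - Jhat x ys (w' - w)
      - (Jhat x ys - Jhat x y) w) (Jhat x y (w - v))
    have n2 := norm_sub_le ((fhatx x ys - fhatx x y) - Jhat x ys (w' - w))
      ((Jhat x ys - Jhat x y) w)
    have n3 := norm_sub_le (fhatx x ys - fhatx x y) (Jhat x ys (w' - w))
    linarith [h2, t1, t2, t3, n1, n2, n3]
  -- scalar estimation
  have h11 : μ_g ^ 3 * ‖GF - T‖ ≤
      (μ_g ^ 2 * L_f1 + μ_g * L_g1 * L_f1 + L_g1 * L_f0 * L_g2 + μ_g * L_f0 * L_g2)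
        * ‖ghaty x y‖ + μ_g ^ 2 * L_g1 * ‖Hhat x y v - fhaty x y‖ := by
    have hL1 : (0:ℝ) ≤ L_g1 := hμ.le.trans hμL
    have hmul := mul_le_mul_of_nonneg_left h10 (le_of_lt (pow_pos hμ 3))
    have A := mul_le_mul_of_nonneg_left h7 (mul_nonneg hμ.le hL1)
    have B := mul_le_mul_of_nonneg_left h6
      (mul_nonneg (mul_nonneg (pow_nonneg hμ.le 2) hLg2.le) hd0)
    have Cc := mul_le_mul_of_nonneg_left h8 (mul_nonneg (pow_nonneg hμ.le 2) hL1)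
    have D1 := mul_le_mul_of_nonneg_left hd1 (mul_nonneg (pow_nonneg hμ.le 2) hLf1.le)
    have D2 := mul_le_mul_of_nonneg_left hd1
      (by nlinarith [mul_nonneg (mul_nonneg hμ.le hL1) hLf1.le,
          mul_nonneg (mul_nonneg hL1 hLf0.le) hLg2.le,
          mul_nonneg (mul_nonneg hμ.le hLf0.le) hLg2.le] :
        (0:ℝ) ≤ μ_g * L_g1 * L_f1 + L_g1 * L_f0 * L_g2 + μ_g * L_f0 * L_g2)
    linarith only [hmul, A, B, Cc, D1, D2]
  have h12 : ‖GF - T‖ ^ 2 ≤ κ_F * ‖ghaty x y‖ ^ 2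
      + 8 * κ_g ^ 2 * ‖Hhat x y v - fhaty x y‖ ^ 2 :=
    scalar_key hμ hμL hLf0 hLf1 hLg2 hκg hκF (norm_nonneg _) (norm_nonneg _)
      (norm_nonneg _) h11
  -- assemble
  have hGFle : ‖GF‖ ≤ ‖T‖ + ‖GF - T‖ := by
    calc ‖GF‖ = ‖T + (GF - T)‖ := by congr 1; abel
      _ ≤ ‖T‖ + ‖GF - T‖ := norm_add_le _ _
  have hmap2 : ‖γ⁻¹ • (x - projX (x - γ • GF))‖ ^ 2 ≤ ‖GF‖ ^ 2 :=
    pow_le_pow_left₀ (norm_nonneg _) hmap 2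
  have hGF2 : ‖GF‖ ^ 2 ≤ 2 * ‖T‖ ^ 2 + 2 * ‖GF - T‖ ^ 2 := by
    have hp := pow_le_pow_left₀ (norm_nonneg GF) hGFle 2
    linarith only [hp, sq_nonneg (‖T‖ - ‖GF - T‖)]
  have hfinal : ‖γ⁻¹ • (x - projX (x - γ • GF))‖ ^ 2 ≤ 2 * (δ ^ 2 / W ^ 2) := by
    linarith only [hmap2, hGF2, h12, hstop]
  calc ‖γ⁻¹ • (x - projX (x - γ • GF))‖ ^ 2 ≤ 2 * (δ ^ 2 / W ^ 2) := hfinal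
    _ = 2 * δ ^ 2 / W ^ 2 := by ring
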